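/- The formal power series M(z) = (18z − 1 + (1−12z)^{3/2}) / (54z²) satisfies [zⁿ] M(z) = (2·3ⁿ / ((n+1)(n+2))) · C(2n, n) for all n ≥ 0. -/

import Mathlib

open PowerSeries

/-- The generalized binomial coefficient `r(r−1)⋯(r−n+1)/n!`. -/
noncomputable def genBinom (r : ℚ) (n : ℕ) : ℚ :=
  (∏ i ∈ Finset.range n, (r - i)) / n.factorial

/-- The binomial series `(1 − 12z)^{3/2} = ∑ C(3/2, n) (−12)ⁿ zⁿ`. -/
noncomputable def oneSub12ZPow32 : PowerSeries ℚ :=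
  PowerSeries.mk fun n => genBinom (3/2) n * (-12) ^ n

/-- The formal power series
`M(z) = (18z − 1 + (1−12z)^{3/2}) / (54z²)`, i.e. the series `M` with
`54 z² M(z) = 18z − 1 + (1−12z)^{3/2}`, satisfies
`[zⁿ] M(z) = 2·3ⁿ/((n+1)(n+2)) · C(2n, n)` for all `n ≥ 0`. -/
lemma genBinom_succ (r : ℚ) (n : ℕ) :
    genBinom r (n + 1) * (n + 1) = genBinom r n * (r - n) := by
  unfold genBinom
  rw [Finset.prod_range_succ, Nat.factorial_succ]
  have h1 : (n.factorial : ℚ) ≠ 0 := Nat.cast_ne_zero.mpr n.factorial_ne_zero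
  have h2 : ((n : ℚ) + 1) ≠ 0 := by positivity
  field_simp
  push_cast
  ring

lemma key (n : ℕ) :
    genBinom (3/2) (n + 2) * (-12) ^ (n + 2)
      = 54 * (2 * 3 ^ n / ((n + 1) * (n + 2)) * ((2 * n).choose n : ℚ)) := by
  induction n with
  | zero =>
    unfold genBinom
    simp [Finset.prod_range_succ]
    norm_num
  | succ n ih =>
    have hrec := genBinom_succ (3/2) (n + 2)
    have hcb := Nat.succ_mul_centralBinom_succ n
    have hcbQ : ((n : ℚ) + 1) * ((2 * (n + 1)).choose (n + 1) : ℚ)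
        = 2 * (2 * n + 1) * ((2 * n).choose n : ℚ) := by
      have := congrArg (Nat.cast : ℕ → ℚ) hcb
      simp [Nat.centralBinom] at this
      push_cast at this ⊢
      linarith
    have h1 : ((n : ℚ) + 1) ≠ 0 := by positivity
    have h2 : ((n : ℚ) + 2) ≠ 0 := by positivity
    have h3 : ((n : ℚ) + 3) ≠ 0 := by positivity
    have e0 : n + 2 + 1 = n + 3 := by omega
    rw [e0] at hrec
    push_cast at hrec
    have hrec' : genBinom (3/2) (n + 3) * ((n:ℚ) + 3) = genBinom (3/2) (n + 2) * (3/2 - ((n:ℚ) + 2)) := by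
      linear_combination hrec
    have goal : genBinom (3/2) (n + 1 + 2) * (-12) ^ (n + 1 + 2)
        = 54 * (2 * 3 ^ (n+1) / (((n:ℚ) + 1 + 1) * ((n:ℚ) + 1 + 2)) * ((2 * (n+1)).choose (n+1) : ℚ)) := by
      have e1 : (n + 1 + 2) = n + 3 := by ring
      rw [e1]
      have hg : genBinom (3/2) (n + 3) = genBinom (3/2) (n + 2) * (3/2 - (n + 2)) / ((n:ℚ) + 3) := by
        field_simp at hrec' ⊢; linarith [hrec']
      rw [hg]
      have hc : ((2 * (n+1)).choose (n+1) : ℚ) = 2 * (2 * n + 1) * ((2 * n).choose n : ℚ) / ((n:ℚ)+1) := by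
        field_simp; linarith [hcbQ]
      rw [hc]
      field_simp at ih ⊢
      ring_nf
      ring_nf at ih
      nlinarith [ih]
    push_cast at goal ⊢
    convert goal using 2 <;> push_cast <;> ring
  
theorem coeff_map_series (M : PowerSeries ℚ)
    (hM : (PowerSeries.C (R := ℚ) 54) * PowerSeries.X ^ 2 * M
        = (PowerSeries.C (R := ℚ) 18) * PowerSeries.X - 1 + oneSub12ZPow32) :
    ∀ n : ℕ,
      PowerSeries.coeff (R := ℚ) n M
        = 2 * 3 ^ n / ((n + 1) * (n + 2)) * Nat.choose (2 * n) n := by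
  intro n
  have h := congrArg (PowerSeries.coeff (R := ℚ) (n + 2)) hM
  rw [mul_assoc, PowerSeries.coeff_C_mul] at h
  have hx : PowerSeries.coeff (R := ℚ) (n + 2) (PowerSeries.X ^ 2 * M) = PowerSeries.coeff (R := ℚ) n M := by
    simpa using PowerSeries.coeff_X_pow_mul M 2 n
  rw [hx] at h
  simp [oneSub12ZPow32, PowerSeries.coeff_mk, PowerSeries.coeff_one,
    PowerSeries.coeff_C_mul, PowerSeries.coeff_X] at h
  have hk := key n
  rw [hk] at h
  have : (54:ℚ) ≠ 0 := by norm_num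
  field_simp at h ⊢
  linarith [h]
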